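/- Let Y be a real random variable with finite fourth moment, mean m, variance v > 0, kurtosis κ and uniform kurtosis c. If the skewness is null, i.e. E[(Y − m)³] = 0, then c = κ + (3 − κ)²/(5 − κ) whenever 1 ≤ κ ≤ 3, and c = κ whenever κ ≥ 3. -/

import Mathlib

open MeasureTheory ProbabilityTheory

lemma abs_pow_le_one_add_pow4 (x : ℝ) {k : ℕ} (hk : k ≤ 4) : |x| ^ k ≤ 1 + x ^ 4 := by
  have hx4 : (0:ℝ) ≤ x ^ 4 := by positivity
  rcases le_total |x| 1 with h | h
  · have : |x| ^ k ≤ 1 := pow_le_one₀ (abs_nonneg x) h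
    linarith
  · have h1 : |x| ^ k ≤ |x| ^ 4 := pow_le_pow_right₀ h hk
    have h2 : |x| ^ 4 = x ^ 4 := by
      rw [← abs_pow, abs_of_nonneg hx4]
    linarith [h1.trans_eq h2]

/-- Lemma (uniform kurtosis under zero skewness): if `E[(Y - m)³] = 0` then the uniform
kurtosis `c` equals `κ + (3 - κ)²/(5 - κ)` when `1 ≤ κ ≤ 3` and equals `κ` when `κ ≥ 3`. -/
theorem uniform_kurtosis_of_zero_skewness
    {Ω : Type*} [MeasurableSpace Ω] (P : Measure Ω) [IsProbabilityMeasure P]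
    (Y : Ω → ℝ) (hY : Measurable Y)
    (hL4 : Integrable (fun ω => (Y ω) ^ 4) P)
    (m v κ c : ℝ)
    (hm : m = ∫ ω, Y ω ∂P)
    (hv : v = ∫ ω, (Y ω - m) ^ 2 ∂P) (hvpos : 0 < v)
    (hκ : κ = (∫ ω, (Y ω - m) ^ 4 ∂P) / v ^ 2)
    (hc : c = ⨆ θ : ℝ, (∫ ω, (Y ω - θ) ^ 4 ∂P) / (∫ ω, (Y ω - θ) ^ 2 ∂P) ^ 2)
    (hskew : (∫ ω, (Y ω - m) ^ 3 ∂P) = 0) :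
    (1 ≤ κ → κ ≤ 3 → c = κ + (3 - κ) ^ 2 / (5 - κ)) ∧
    (3 ≤ κ → c = κ) := by
  have hvne : v ≠ 0 := hvpos.ne'
  set X : Ω → ℝ := fun ω => Y ω - m with hXdef
  have hXmeas : Measurable X := hY.sub measurable_const
  -- integrability of Y
  have hIY : Integrable Y P := by
    refine ((integrable_const (1:ℝ)).add hL4).mono' hY.aestronglyMeasurable ?_
    filter_upwards with ω
    have := abs_pow_le_one_add_pow4 (Y ω) (k := 1) (by norm_num)
    simpa using this
  -- integrability of X^4
  have hI4 : Integrable (fun ω => X ω ^ 4) P := by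
    refine ((integrable_const (8 * m ^ 4)).add (hL4.const_mul 8)).mono'
      ((hXmeas.pow_const 4).aestronglyMeasurable) ?_
    filter_upwards with ω
    have h1 : |X ω ^ 4| = X ω ^ 4 := abs_of_nonneg (by positivity)
    have h2 : (Y ω - m) ^ 4 ≤ 8 * m ^ 4 + 8 * Y ω ^ 4 := by
      nlinarith [sq_nonneg (Y ω + m), sq_nonneg (Y ω - m), sq_nonneg (Y ω ^ 2 - m ^ 2),
        sq_nonneg (Y ω ^ 2 + m ^ 2), sq_nonneg (Y ω * m), sq_nonneg ((Y ω - m) ^ 2)]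
    have h3 : |Y ω - m| ^ 4 = (Y ω - m) ^ 4 := by
      rw [← abs_pow, abs_of_nonneg (by positivity)]
    simp only [hXdef, Real.norm_eq_abs, h1]
    simpa [hXdef, h3] using h2
  -- integrability of lower powers of X
  have hIk : ∀ k : ℕ, k ≤ 4 → Integrable (fun ω => X ω ^ k) P := by
    intro k hk
    refine ((integrable_const (1:ℝ)).add hI4).mono'
      ((hXmeas.pow_const k).aestronglyMeasurable) ?_
    filter_upwards with ω
    have := abs_pow_le_one_add_pow4 (X ω) hk
    simpa [abs_pow] using this
  have hI1 : Integrable X P := by simpa using hIk 1 (by norm_num)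
  have hI2 : Integrable (fun ω => X ω ^ 2) P := hIk 2 (by norm_num)
  have hI3 : Integrable (fun ω => X ω ^ 3) P := hIk 3 (by norm_num)
  -- moments
  have hm0 : ∫ ω, X ω ∂P = 0 := by
    rw [hXdef]
    rw [integral_sub hIY (integrable_const m), integral_const]
    simp [hm]
  have hv2 : ∫ ω, X ω ^ 2 ∂P = v := hv.symm
  have h3 : ∫ ω, X ω ^ 3 ∂P = 0 := hskew
  have h4 : ∫ ω, X ω ^ 4 ∂P = κ * v ^ 2 := by
    rw [hκ]
    field_simp
    rfl
  -- expansion of second moment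
  have expand2 : ∀ t : ℝ, ∫ ω, (X ω + t) ^ 2 ∂P = v + t ^ 2 := by
    intro t
    have h : (fun ω => (X ω + t) ^ 2) = fun ω => X ω ^ 2 + ((2 * t) * X ω + t ^ 2) := by
      funext ω; ring
    have iA : Integrable (fun ω => (2 * t) * X ω + t ^ 2) P :=
      (hI1.const_mul (2 * t)).add (integrable_const (t ^ 2))
    rw [h, integral_add hI2 iA,
      integral_add (hI1.const_mul (2 * t)) (integrable_const (t ^ 2)),
      integral_const_mul, hm0, hv2, integral_const]
    simp
  -- expansion of fourth moment
  have expand4 : ∀ t : ℝ, ∫ ω, (X ω + t) ^ 4 ∂P = κ * v ^ 2 + 6 * v * t ^ 2 + t ^ 4 := by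
    intro t
    have h : (fun ω => (X ω + t) ^ 4) = fun ω =>
        X ω ^ 4 + ((4 * t) * X ω ^ 3 + ((6 * t ^ 2) * X ω ^ 2 +
          ((4 * t ^ 3) * X ω + t ^ 4))) := by
      funext ω; ring
    have i2 : Integrable (fun ω => (4 * t) * X ω ^ 3) P := hI3.const_mul (4 * t)
    have i3 : Integrable (fun ω => (6 * t ^ 2) * X ω ^ 2) P := hI2.const_mul (6 * t ^ 2)
    have i4 : Integrable (fun ω => (4 * t ^ 3) * X ω) P := hI1.const_mul (4 * t ^ 3)
    have i5 : Integrable (fun _ : Ω => t ^ 4) P := integrable_const _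
    have i45 : Integrable (fun ω => (4 * t ^ 3) * X ω + t ^ 4) P := i4.add i5
    have i345 : Integrable (fun ω => (6 * t ^ 2) * X ω ^ 2 +
        ((4 * t ^ 3) * X ω + t ^ 4)) P := i3.add i45
    have i2345 : Integrable (fun ω => (4 * t) * X ω ^ 3 + ((6 * t ^ 2) * X ω ^ 2 +
        ((4 * t ^ 3) * X ω + t ^ 4))) P := i2.add i345
    rw [h, integral_add hI4 i2345, integral_add i2 i345, integral_add i3 i45,
      integral_add i4 i5, integral_const_mul, integral_const_mul, integral_const_mul,
      hm0, h3, hv2, h4, integral_const]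
    simp
    ring
  -- the ratio as a function of θ
  have hF : ∀ θ : ℝ, (∫ ω, (Y ω - θ) ^ 4 ∂P) / (∫ ω, (Y ω - θ) ^ 2 ∂P) ^ 2 =
      (κ * v ^ 2 + 6 * v * (m - θ) ^ 2 + (m - θ) ^ 4) / (v + (m - θ) ^ 2) ^ 2 := by
    intro θ
    have h2 : (fun ω => (Y ω - θ) ^ 2) = fun ω => (X ω + (m - θ)) ^ 2 := by
      funext ω; simp only [hXdef]; ring
    have h4' : (fun ω => (Y ω - θ) ^ 4) = fun ω => (X ω + (m - θ)) ^ 4 := by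
      funext ω; simp only [hXdef]; ring
    rw [h2, h4', expand2, expand4]
  rw [hc]
  constructor
  · -- case 1 ≤ κ ≤ 3
    intro hκ1 hκ3
    have h5 : (0:ℝ) < 5 - κ := by linarith
    have hM : κ + (3 - κ) ^ 2 / (5 - κ) = (9 - κ) / (5 - κ) := by
      field_simp; ring
    have hub : ∀ θ : ℝ,
        (∫ ω, (Y ω - θ) ^ 4 ∂P) / (∫ ω, (Y ω - θ) ^ 2 ∂P) ^ 2 ≤ κ + (3 - κ) ^ 2 / (5 - κ) := by
      intro θ
      rw [hF θ, hM]
      set t := m - θ with ht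
      have hden : (0:ℝ) < (v + t ^ 2) ^ 2 := by positivity
      rw [div_le_div_iff₀ hden h5]
      nlinarith [sq_nonneg (2 * t ^ 2 + (κ - 3) * v), sq_nonneg t, hvpos]
    -- attained at θ₀
    set θ₀ : ℝ := m - Real.sqrt (v * (3 - κ) / 2) with hθ₀
    have ht2 : (m - θ₀) ^ 2 = v * (3 - κ) / 2 := by
      rw [hθ₀]
      have : m - (m - Real.sqrt (v * (3 - κ) / 2)) = Real.sqrt (v * (3 - κ) / 2) := by ring
      rw [this, Real.sq_sqrt]
      have : (0:ℝ) ≤ 3 - κ := by linarith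
      positivity
    have hatt : (∫ ω, (Y ω - θ₀) ^ 4 ∂P) / (∫ ω, (Y ω - θ₀) ^ 2 ∂P) ^ 2 =
        κ + (3 - κ) ^ 2 / (5 - κ) := by
      have ht4 : (m - θ₀) ^ 4 = (v * (3 - κ) / 2) ^ 2 := by
        rw [show (m - θ₀) ^ 4 = ((m - θ₀) ^ 2) ^ 2 by ring, ht2]
      rw [hF θ₀, ht4, ht2, hM,
        show v + v * (3 - κ) / 2 = v * (5 - κ) / 2 by ring,
        div_eq_div_iff (by positivity) (by positivity)]
      ring
    have hbdd : BddAbove (Set.range fun θ : ℝ =>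
        (∫ ω, (Y ω - θ) ^ 4 ∂P) / (∫ ω, (Y ω - θ) ^ 2 ∂P) ^ 2) := by
      refine ⟨κ + (3 - κ) ^ 2 / (5 - κ), ?_⟩
      rintro _ ⟨θ, rfl⟩
      exact hub θ
    refine le_antisymm (ciSup_le hub) ?_
    calc κ + (3 - κ) ^ 2 / (5 - κ)
        = (∫ ω, (Y ω - θ₀) ^ 4 ∂P) / (∫ ω, (Y ω - θ₀) ^ 2 ∂P) ^ 2 := hatt.symm
      _ ≤ _ := le_ciSup hbdd θ₀
  · -- case κ ≥ 3
    intro hκ3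
    have hub : ∀ θ : ℝ,
        (∫ ω, (Y ω - θ) ^ 4 ∂P) / (∫ ω, (Y ω - θ) ^ 2 ∂P) ^ 2 ≤ κ := by
      intro θ
      rw [hF θ]
      set t := m - θ with ht
      have hden : (0:ℝ) < (v + t ^ 2) ^ 2 := by positivity
      rw [div_le_iff₀ hden]
      nlinarith [sq_nonneg t, sq_nonneg (t ^ 2), mul_nonneg hvpos.le (sq_nonneg t),
        mul_nonneg (mul_nonneg hvpos.le (sq_nonneg t)) (by linarith : (0:ℝ) ≤ κ - 3),
        mul_nonneg (sq_nonneg (t ^ 2)) (by linarith : (0:ℝ) ≤ κ - 1)]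
    have hatt : (∫ ω, (Y ω - m) ^ 4 ∂P) / (∫ ω, (Y ω - m) ^ 2 ∂P) ^ 2 = κ := by
      rw [hF m]
      field_simp
      ring
    have hbdd : BddAbove (Set.range fun θ : ℝ =>
        (∫ ω, (Y ω - θ) ^ 4 ∂P) / (∫ ω, (Y ω - θ) ^ 2 ∂P) ^ 2) := by
      refine ⟨κ, ?_⟩
      rintro _ ⟨θ, rfl⟩
      exact hub θ
    refine le_antisymm (ciSup_le hub) ?_
    calc κ = (∫ ω, (Y ω - m) ^ 4 ∂P) / (∫ ω, (Y ω - m) ^ 2 ∂P) ^ 2 := hatt.symm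
      _ ≤ _ := le_ciSup hbdd m
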